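/- arXiv:2103.10904 — 2 statements merged into one kernel-verified Lean document; each statement's English description precedes it below -/
import Mathlib

section
/- If n ≥ 1 is a non-negative integer linear combination of upper Wythoff numbers each at least m, where m ≥ 3, then n can be written as a sum of one, two, or three upper Wythoff numbers each at least m. -/
noncomputable def phi : ℝ := (1 + Real.sqrt 5) / 2

/-- An upper Wythoff number: a number of the form `⌊k·φ²⌋` for `k ≥ 1`. -/
def IsUpperWythoff (x : ℕ) : Prop := ∃ k : ℕ, 1 ≤ k ∧ x = ⌊(k : ℝ) * phi ^ 2⌋₊

lemma sqrt5_lo : (2.236:ℝ) < Real.sqrt 5 := by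
  have h : (2.236:ℝ) = Real.sqrt (2.236^2) := by
    rw [Real.sqrt_sq]; norm_num
  rw [h]; apply Real.sqrt_lt_sqrt <;> norm_num

lemma sqrt5_hi : Real.sqrt 5 < 2.2361 := by
  have h : (2.2361:ℝ) = Real.sqrt (2.2361^2) := by
    rw [Real.sqrt_sq]; norm_num
  rw [h]; apply Real.sqrt_lt_sqrt <;> norm_num

lemma phi_lo : (1.618:ℝ) < phi := by unfold phi; linarith [sqrt5_lo]
lemma phi_hi : phi < 1.61805 := by unfold phi; linarith [sqrt5_hi]
lemma phi_pos : 0 < phi := by linarith [phi_lo]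

lemma phi_sq : phi^2 = phi + 1 := by
  have h5 : Real.sqrt 5 ^ 2 = 5 := Real.sq_sqrt (by norm_num)
  unfold phi; field_simp; nlinarith [h5]

lemma phi_irrational : Irrational phi := by
  have h5 : Irrational (Real.sqrt 5) := (by norm_num : Nat.Prime 5).irrational_sqrt
  have h : phi = ((1/2 : ℚ) : ℝ) * ((1:ℚ) + Real.sqrt 5) := by
    unfold phi; push_cast; ring
  rw [h]
  exact ((h5.ratCast_add (q := 1)).ratCast_mul (by norm_num))

lemma phi_int_combo {a : ℤ} (ha : a ≠ 0) (z : ℤ) : (a:ℝ) * phi ≠ (z:ℝ) := by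
  intro h
  have ha' : (a:ℝ) ≠ 0 := Int.cast_ne_zero.mpr ha
  apply phi_irrational
  refine ⟨(z:ℚ)/(a:ℚ), ?_⟩
  push_cast
  field_simp
  linarith [h]

noncomputable def A (k : ℕ) : ℕ := ⌊(k:ℝ) * phi⌋₊
noncomputable def fr (k : ℕ) : ℝ := (k:ℝ) * phi - (A k : ℝ)
noncomputable def Bf (k : ℕ) : ℕ := ⌊(k : ℝ) * phi ^ 2⌋₊

lemma kphi_nonneg (k : ℕ) : (0:ℝ) ≤ (k:ℝ) * phi :=
  mul_nonneg (Nat.cast_nonneg k) (le_of_lt phi_pos)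

lemma A_fr (k : ℕ) : (k:ℝ) * phi = (A k : ℝ) + fr k := by unfold fr; ring

lemma fr_nonneg (k : ℕ) : 0 ≤ fr k := by
  unfold fr A; have := Nat.floor_le (kphi_nonneg k); linarith

lemma fr_lt_one (k : ℕ) : fr k < 1 := by
  unfold fr A; have := Nat.lt_floor_add_one ((k:ℝ) * phi); linarith

lemma A_ge (k : ℕ) : k ≤ A k := by
  unfold A
  apply Nat.le_floor
  nlinarith [phi_lo, Nat.cast_nonneg (α := ℝ) k]

lemma A_mono {p q : ℕ} (h : p ≤ q) : A p ≤ A q := by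
  unfold A
  apply Nat.floor_mono
  have : (p:ℝ) ≤ q := Nat.cast_le.mpr h
  nlinarith [phi_pos]

lemma Bf_eq (k : ℕ) : Bf k = k + A k := by
  unfold Bf A
  rw [show (k:ℝ)*phi^2 = (k:ℝ)*phi + (k:ℕ) by rw [phi_sq]; push_cast; ring]
  rw [Nat.floor_add_natCast (kphi_nonneg k)]
  omega

lemma Bf_mono {p q : ℕ} (h : p ≤ q) : Bf p ≤ Bf q := by
  rw [Bf_eq, Bf_eq]; have := A_mono h; omega

lemma A_eq (x v : ℕ) (h1 : (v:ℝ) ≤ (x:ℝ) * phi) (h2 : (x:ℝ) * phi < (v:ℝ) + 1) : A x = v := by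
  unfold A
  rw [Nat.floor_eq_iff (kphi_nonneg x)]
  exact ⟨h1, h2⟩

lemma A_val (x v : ℕ) (h1 : (v:ℝ) ≤ x * 1.618) (h2 : (x:ℝ) * 1.61805 < v + 1) : A x = v := by
  apply A_eq
  · nlinarith [phi_lo, Nat.cast_nonneg (α := ℝ) x]
  · nlinarith [phi_hi, Nat.cast_nonneg (α := ℝ) x]

lemma fr_val (x v : ℕ) (hA : A x = v) : fr x = (x:ℝ) * phi - v := by
  unfold fr; rw [hA]

lemma fr2 : fr 2 = 2*phi - 3 := by rw [fr_val 2 3 (A_val 2 3 (by norm_num) (by norm_num))]; push_cast; ring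
lemma fr3 : fr 3 = 3*phi - 4 := by rw [fr_val 3 4 (A_val 3 4 (by norm_num) (by norm_num))]; push_cast; ring
lemma fr4 : fr 4 = 4*phi - 6 := by rw [fr_val 4 6 (A_val 4 6 (by norm_num) (by norm_num))]; push_cast; ring
lemma fr5 : fr 5 = 5*phi - 8 := by rw [fr_val 5 8 (A_val 5 8 (by norm_num) (by norm_num))]; push_cast; ring
lemma fr6 : fr 6 = 6*phi - 9 := by rw [fr_val 6 9 (A_val 6 9 (by norm_num) (by norm_num))]; push_cast; ring
lemma fr7 : fr 7 = 7*phi - 11 := by rw [fr_val 7 11 (A_val 7 11 (by norm_num) (by norm_num))]; push_cast; ring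
lemma fr8 : fr 8 = 8*phi - 12 := by rw [fr_val 8 12 (A_val 8 12 (by norm_num) (by norm_num))]; push_cast; ring
lemma fr9 : fr 9 = 9*phi - 14 := by rw [fr_val 9 14 (A_val 9 14 (by norm_num) (by norm_num))]; push_cast; ring
lemma fr10 : fr 10 = 10*phi - 16 := by rw [fr_val 10 16 (A_val 10 16 (by norm_num) (by norm_num))]; push_cast; ring

/-- if fr x ∈ (4-2φ, φ/2) then x ≥ 11 (for x ≥ 2) -/
lemma excl1 (x : ℕ) (hx : 2 ≤ x) (hlo : 4 - 2*phi < fr x) (hhi : fr x < phi/2) : 11 ≤ x := by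
  by_contra hc
  push_neg at hc
  interval_cases x <;>
    simp only [fr2, fr3, fr4, fr5, fr6, fr7, fr8, fr9, fr10] at hlo hhi <;>
    linarith [phi_lo, phi_hi]

/-- if fr x ∈ (7-4φ, φ/2) then x ≥ 6 (for x ≥ 2) -/
lemma excl2 (x : ℕ) (hx : 2 ≤ x) (hlo : 7 - 4*phi < fr x) (hhi : fr x < phi/2) : 6 ≤ x := by
  by_contra hc
  push_neg at hc
  interval_cases x <;>
    simp only [fr2, fr3, fr4, fr5] at hlo hhi <;>
    linarith [phi_lo, phi_hi]

/-- if fr x ∈ (4φ-6, 4-2φ) then x ≥ 6 (for x ≥ 2) -/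
lemma excl3 (x : ℕ) (hx : 2 ≤ x) (hlo : 4*phi - 6 < fr x) (hhi : fr x < 4 - 2*phi) : 6 ≤ x := by
  by_contra hc
  push_neg at hc
  interval_cases x <;>
    simp only [fr2, fr3, fr4, fr5] at hlo hhi <;>
    linarith [phi_lo, phi_hi]

/-- index bound for the C3 move -/
lemma c3idx_aux (k0 p q : ℕ) (h0 : 2 ≤ k0) (hp : k0 ≤ p) (hq : k0 ≤ q) (hp4 : p ≤ 4)
    (h1 : 1 < fr p + fr q) (hpf : fr p < phi/2) (hqf : fr q < phi/2) :
    k0 + 5 ≤ p + q := by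
  have hp2 : 2 ≤ p := le_trans h0 hp
  interval_cases p
  · -- p = 2
    have h2 : fr 2 = 2*phi - 3 := fr2
    have hqlo : 4 - 2*phi < fr q := by rw [h2] at h1; linarith
    have := excl1 q (by omega) hqlo hqf
    omega
  · -- p = 3 : contradiction
    have h3 : fr 3 = 3*phi - 4 := fr3
    rw [h3] at hpf; linarith [phi_lo]
  · -- p = 4
    have h4 : fr 4 = 4*phi - 6 := fr4
    have hqlo : 7 - 4*phi < fr q := by rw [h4] at h1; linarith
    have := excl2 q (by omega) hqlo hqf
    omega

lemma c3idx (k0 p q : ℕ) (h0 : 2 ≤ k0) (hp : k0 ≤ p) (hq : k0 ≤ q)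
    (h1 : 1 < fr p + fr q) (hpf : fr p < phi/2) (hqf : fr q < phi/2) :
    k0 + 5 ≤ p + q := by
  by_cases hp4 : p ≤ 4
  · exact c3idx_aux k0 p q h0 hp hq hp4 h1 hpf hqf
  · by_cases hq4 : q ≤ 4
    · have := c3idx_aux k0 q p h0 hq hp hq4 (by linarith) hqf hpf
      omega
    · omega

/-- MERGE move -/
lemma case_merge (p q : ℕ) (h : fr p + fr q < 1) : Bf (p+q) = Bf p + Bf q := by
  have hA : A (p+q) = A p + A q := by
    apply A_eq
    · push_cast
      have e1 := A_fr p; have e2 := A_fr q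
      have := fr_nonneg p; have := fr_nonneg q
      nlinarith [e1, e2]
    · push_cast
      have e1 := A_fr p; have e2 := A_fr q
      nlinarith [e1, e2]
  rw [Bf_eq, Bf_eq, Bf_eq, hA]; omega

/-- SINGLE move : S ∈ (1+φ, 2+φ) -/
lemma case_single (p q r s : ℕ) (hp : 2 ≤ p)
    (h1 : 1 + phi < fr p + fr q + fr r + fr s)
    (h2 : fr p + fr q + fr r + fr s < 2 + phi) :
    Bf (p+q+r+s-1) = Bf p + Bf q + Bf r + Bf s := by
  have hK : 1 ≤ p+q+r+s := by omega
  have hA : A (p+q+r+s-1) = A p + A q + A r + A s + 1 := by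
    apply A_eq
    · push_cast [Nat.cast_sub hK]
      have e1 := A_fr p; have e2 := A_fr q; have e3 := A_fr r; have e4 := A_fr s
      nlinarith [e1, e2, e3, e4]
    · push_cast [Nat.cast_sub hK]
      have e1 := A_fr p; have e2 := A_fr q; have e3 := A_fr r; have e4 := A_fr s
      nlinarith [e1, e2, e3, e4]
  rw [Bf_eq, Bf_eq, Bf_eq, Bf_eq, Bf_eq, hA]
  omega

/-- C1 move: (r+2, s, p+q-2) -/
lemma case_C1 (p q r s : ℕ) (hp : 2 ≤ p) (hq : 2 ≤ q)
    (h1 : 1 < fr p + fr q) (h2 : fr p + fr q < 2*phi - 2) (h3 : fr r < 4 - 2*phi) :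
    Bf (r+2) + Bf s + Bf (p+q-2) = Bf p + Bf q + Bf r + Bf s := by
  have hA3 : 3 ≤ A p + A q := by have := A_ge p; have := A_ge q; omega
  have hpq : 2 ≤ p + q := by omega
  have hAr : A (r+2) = A r + 3 := by
    apply A_eq <;> push_cast <;>
      nlinarith [A_fr r, fr_nonneg r, phi_lo, phi_hi]
  have hApq : A (p+q-2) = A p + A q - 3 := by
    apply A_eq <;> rw [Nat.cast_sub hpq, Nat.cast_sub hA3] <;> push_cast <;>
      nlinarith [A_fr p, A_fr q, phi_lo, phi_hi]
  rw [Bf_eq (r+2), Bf_eq s, Bf_eq (p+q-2), Bf_eq p, Bf_eq q, Bf_eq r, hAr, hApq]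
  omega

/-- C2 move: (r+2, s+2, p+q-4) -/
lemma case_C2 (p q r s : ℕ) (hp : 6 ≤ p) (hq : 6 ≤ q)
    (h1 : 4*phi - 6 < fr p + fr q) (h2 : fr p + fr q < 4*phi - 5)
    (h3 : fr r < 4 - 2*phi) (h4 : fr s < 4 - 2*phi) :
    Bf (r+2) + Bf (s+2) + Bf (p+q-4) = Bf p + Bf q + Bf r + Bf s := by
  have hA6 : 6 ≤ A p + A q := by have := A_ge p; have := A_ge q; omega
  have hpq : 4 ≤ p + q := by omega
  have hAr : A (r+2) = A r + 3 := by
    apply A_eq <;> push_cast <;>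
      nlinarith [A_fr r, fr_nonneg r, phi_lo, phi_hi]
  have hAs : A (s+2) = A s + 3 := by
    apply A_eq <;> push_cast <;>
      nlinarith [A_fr s, fr_nonneg s, phi_lo, phi_hi]
  have hApq : A (p+q-4) = A p + A q - 6 := by
    apply A_eq <;> rw [Nat.cast_sub hpq, Nat.cast_sub hA6] <;> push_cast <;>
      nlinarith [A_fr p, A_fr q, phi_lo, phi_hi]
  rw [Bf_eq (r+2), Bf_eq (s+2), Bf_eq (p+q-4), Bf_eq p, Bf_eq q, Bf_eq r, Bf_eq s, hAr, hAs, hApq]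
  omega

/-- C3 move: (r, s+5, p+q-5) -/
lemma case_C3 (p q r s : ℕ) (hp : 2 ≤ p) (hq : 2 ≤ q) (hpq5 : 7 ≤ p + q)
    (h1 : 1 < fr p + fr q) (h2 : fr p + fr q < 5*phi - 7) (h4 : fr s < 9 - 5*phi) :
    Bf r + Bf (s+5) + Bf (p+q-5) = Bf p + Bf q + Bf r + Bf s := by
  have hA8 : 8 ≤ A p + A q := by
    rcases le_total p q with h | h
    · have h4' : 4 ≤ q := by omega
      have := A_mono h4'
      have hA4 : A 4 = 6 := A_val 4 6 (by norm_num) (by norm_num)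
      have := A_ge p; omega
    · have h4' : 4 ≤ p := by omega
      have := A_mono h4'
      have hA4 : A 4 = 6 := A_val 4 6 (by norm_num) (by norm_num)
      have := A_ge q; omega
  have hpq : 5 ≤ p + q := by omega
  have hAs : A (s+5) = A s + 8 := by
    apply A_eq <;> push_cast <;>
      nlinarith [A_fr s, fr_nonneg s, fr_lt_one s, phi_lo, phi_hi]
  have hApq : A (p+q-5) = A p + A q - 8 := by
    apply A_eq <;> rw [Nat.cast_sub hpq, Nat.cast_sub hA8] <;> push_cast <;>
      nlinarith [A_fr p, A_fr q, phi_lo, phi_hi]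
  rw [Bf_eq (s+5), Bf_eq (p+q-5), Bf_eq p, Bf_eq q, Bf_eq s, hAs, hApq]
  omega

/-- Q2 move: (p+q-1, r+1, s-1) -/
lemma case_Q2 (p q r s : ℕ) (hp : 2 ≤ p) (hq : 2 ≤ q) (hs : 2 ≤ s)
    (h1 : phi < fr p + fr q) (h2 : 2 - phi ≤ fr r) (h3 : phi - 1 ≤ fr s) :
    Bf (p+q-1) + Bf (r+1) + Bf (s-1) = Bf p + Bf q + Bf r + Bf s := by
  have hpq : 1 ≤ p + q := by omega
  have hAs1 : 1 ≤ A s := by have := A_ge s; omega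
  have hApq : A (p+q-1) = A p + A q := by
    apply A_eq <;> rw [Nat.cast_sub hpq] <;> push_cast <;>
      nlinarith [A_fr p, A_fr q, fr_lt_one p, fr_lt_one q, phi_lo, phi_hi]
  have hAr : A (r+1) = A r + 2 := by
    apply A_eq <;> push_cast <;>
      nlinarith [A_fr r, fr_lt_one r, phi_lo, phi_hi]
  have hAs : A (s-1) = A s - 1 := by
    apply A_eq <;> rw [Nat.cast_sub (by omega : 1 ≤ s), Nat.cast_sub hAs1] <;> push_cast <;>
      nlinarith [A_fr s, fr_lt_one s, phi_lo, phi_hi]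
  rw [Bf_eq (p+q-1), Bf_eq (r+1), Bf_eq (s-1), Bf_eq p, Bf_eq q, Bf_eq r, Bf_eq s, hApq, hAr, hAs]
  have := A_ge p; have := A_ge q
  omega

/-- Q special move: all indices equal k0 ≥ 4, fr k0 > (2+phi)/4 -/
lemma case_Qspecial (k0 : ℕ) (h0 : 4 ≤ k0) (hf : (2+phi)/4 < fr k0) :
    Bf (2*k0-4) + Bf (k0+2) + Bf (k0+1) = Bf k0 + Bf k0 + Bf k0 + Bf k0 := by
  have hA0 : 5 ≤ 2 * A k0 := by have := A_ge k0; omega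
  have hk4 : 4 ≤ 2 * k0 := by omega
  have hAa : A (2*k0-4) = 2 * A k0 - 5 := by
    apply A_eq <;> rw [Nat.cast_sub hk4, Nat.cast_sub hA0] <;> push_cast <;>
      nlinarith [A_fr k0, fr_lt_one k0, phi_lo, phi_hi]
  have hAb : A (k0+2) = A k0 + 4 := by
    apply A_eq <;> push_cast <;>
      nlinarith [A_fr k0, fr_lt_one k0, phi_lo, phi_hi]
  have hAc : A (k0+1) = A k0 + 2 := by
    apply A_eq <;> push_cast <;>
      nlinarith [A_fr k0, fr_lt_one k0, phi_lo, phi_hi]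
  rw [Bf_eq (2*k0-4), Bf_eq (k0+2), Bf_eq (k0+1), Bf_eq k0, hAa, hAb, hAc]
  omega

lemma sort4_merge (g : ℕ → ℝ) (x1 x2 y1 y2 : ℕ) (hx : g x1 ≤ g x2) (hy : g y1 ≤ g y2) :
    ∃ p q r s : ℕ, g p ≤ g q ∧ g q ≤ g r ∧ g r ≤ g s ∧
      (∀ B : ℕ → ℕ, B p + B q + B r + B s = B x1 + B x2 + B y1 + B y2) ∧
      (∀ P : ℕ → Prop, P x1 → P x2 → P y1 → P y2 → P p ∧ P q ∧ P r ∧ P s) := by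
  rcases le_total (g x1) (g y1) with h | h
  · rcases le_total (g x2) (g y1) with h2 | h2
    · exact ⟨x1, x2, y1, y2, hx, h2, hy, fun B => by ring,
        fun P p1 p2 p3 p4 => ⟨p1, p2, p3, p4⟩⟩
    · rcases le_total (g x2) (g y2) with h3 | h3
      · exact ⟨x1, y1, x2, y2, h, h2, h3, fun B => by ring,
          fun P p1 p2 p3 p4 => ⟨p1, p3, p2, p4⟩⟩
      · exact ⟨x1, y1, y2, x2, h, hy, h3, fun B => by ring,
          fun P p1 p2 p3 p4 => ⟨p1, p3, p4, p2⟩⟩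
  · rcases le_total (g y2) (g x1) with h2 | h2
    · exact ⟨y1, y2, x1, x2, hy, h2, hx, fun B => by ring,
        fun P p1 p2 p3 p4 => ⟨p3, p4, p1, p2⟩⟩
    · rcases le_total (g y2) (g x2) with h3 | h3
      · exact ⟨y1, x1, y2, x2, h, h2, h3, fun B => by ring,
          fun P p1 p2 p3 p4 => ⟨p3, p1, p4, p2⟩⟩
      · exact ⟨y1, x1, x2, y2, h, hx, h3, fun B => by ring,
          fun P p1 p2 p3 p4 => ⟨p3, p1, p2, p4⟩⟩

lemma sort4 (g : ℕ → ℝ) (a b c d : ℕ) :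
    ∃ p q r s : ℕ, g p ≤ g q ∧ g q ≤ g r ∧ g r ≤ g s ∧
      (∀ B : ℕ → ℕ, B p + B q + B r + B s = B a + B b + B c + B d) ∧
      (∀ P : ℕ → Prop, P a → P b → P c → P d → P p ∧ P q ∧ P r ∧ P s) := by
  rcases le_total (g a) (g b) with h | h <;> rcases le_total (g c) (g d) with h' | h'
  · exact sort4_merge g a b c d h h'
  · obtain ⟨p, q, r, s, e1, e2, e3, eB, eP⟩ := sort4_merge g a b d c h h'
    exact ⟨p, q, r, s, e1, e2, e3, fun B => (eB B).trans (by ring),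
      fun P pa pb pc pd => eP P pa pb pd pc⟩
  · obtain ⟨p, q, r, s, e1, e2, e3, eB, eP⟩ := sort4_merge g b a c d h h'
    exact ⟨p, q, r, s, e1, e2, e3, fun B => (eB B).trans (by ring),
      fun P pa pb pc pd => eP P pb pa pc pd⟩
  · obtain ⟨p, q, r, s, e1, e2, e3, eB, eP⟩ := sort4_merge g b a d c h h'
    exact ⟨p, q, r, s, e1, e2, e3, fun B => (eB B).trans (by ring),
      fun P pa pb pc pd => eP P pb pa pd pc⟩

lemma reduce4 (k0 a b c d : ℕ) (h0 : 2 ≤ k0) (ha : k0 ≤ a) (hb : k0 ≤ b) (hc : k0 ≤ c) (hd : k0 ≤ d) :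
    ∃ l : List ℕ, l.length ≤ 3 ∧ (∀ j ∈ l, k0 ≤ j) ∧
      (l.map Bf).sum = Bf a + Bf b + Bf c + Bf d := by
  obtain ⟨p, q, r, s, o1, o2, o3, eB, eP⟩ := sort4 fr a b c d
  obtain ⟨hp, hq, hr, hs⟩ := eP (fun x => k0 ≤ x) ha hb hc hd
  have hp2 : 2 ≤ p := le_trans h0 hp
  have hq2 : 2 ≤ q := le_trans h0 hq
  have hr2 : 2 ≤ r := le_trans h0 hr
  have hs2 : 2 ≤ s := le_trans h0 hs
  have hBsum := eB Bf
  have hfp0 := fr_nonneg p; have hfq0 := fr_nonneg q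
  have hfr0 := fr_nonneg r; have hfs0 := fr_nonneg s
  have hfp1 := fr_lt_one p; have hfq1 := fr_lt_one q
  have hfr1 := fr_lt_one r; have hfs1 := fr_lt_one s
  rcases lt_trichotomy (fr p + fr q) 1 with h1 | h1 | h1
  · -- MERGE
    have e := case_merge p q h1
    refine ⟨[p+q, r, s], by simp, ?_, ?_⟩
    · intro j hj; simp at hj; rcases hj with rfl | rfl | rfl <;> omega
    · simp only [List.map_cons, List.map_nil, List.sum_cons, List.sum_nil]
      omega
  · exact absurd (show ((((p:ℤ)+(q:ℤ)):ℤ):ℝ) * phi = ((((A p:ℤ)+(A q:ℤ)+1):ℤ):ℝ) by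
        push_cast; linear_combination A_fr p + A_fr q + h1)
      (phi_int_combo (by omega) _)
  · rcases lt_trichotomy (fr p + fr q + fr r + fr s) (1 + phi) with hS | hS | hS
    · -- S < 1 + phi
      rcases lt_trichotomy (fr p + fr q) (2*phi - 2) with h12 | h12 | h12
      · rcases lt_trichotomy (fr r) (4 - 2*phi) with h3 | h3 | h3
        · -- C1
          have e := case_C1 p q r s hp2 hq2 h1 h12 h3
          refine ⟨[r+2, s, p+q-2], by simp, ?_, ?_⟩
          · intro j hj; simp at hj; rcases hj with rfl | rfl | rfl <;> omega
          · simp only [List.map_cons, List.map_nil, List.sum_cons, List.sum_nil]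
            omega
        · exact absurd (show ((((r:ℤ)+2):ℤ):ℝ) * phi = ((((A r:ℤ)+4):ℤ):ℝ) by
              push_cast; linear_combination A_fr r + h3)
            (phi_int_combo (by omega) _)
        · -- C3
          have hrs : fr r + fr s < phi := by linarith
          have hs9 : fr s < 9 - 5*phi := by linarith [phi_hi]
          have h2' : fr p + fr q < 5*phi - 7 := by linarith [o3]
          have hpf : fr p < phi/2 := by linarith [o1, o2, o3]
          have hqf : fr q < phi/2 := by linarith [o2, o3]
          have hidx := c3idx k0 p q h0 hp hq h1 hpf hqf
          have e := case_C3 p q r s hp2 hq2 (by omega) h1 h2' hs9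
          refine ⟨[r, s+5, p+q-5], by simp, ?_, ?_⟩
          · intro j hj; simp at hj; rcases hj with rfl | rfl | rfl <;> omega
          · simp only [List.map_cons, List.map_nil, List.sum_cons, List.sum_nil]
            omega
      · exact absurd (show ((((p:ℤ)+(q:ℤ)-2):ℤ):ℝ) * phi = ((((A p:ℤ)+(A q:ℤ)-2):ℤ):ℝ) by
            push_cast; linear_combination A_fr p + A_fr q + h12)
          (phi_int_combo (by omega) _)
      · -- C2
        have hfsq : fr q ≤ fr s := le_trans o2 o3
        have hfsp : fr p ≤ fr s := le_trans o1 hfsq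
        have hfrp : fr p ≤ fr r := le_trans o1 o2
        have hr4 : fr r < 4 - 2*phi := by linarith
        have hs4 : fr s < 4 - 2*phi := by linarith
        have hplo : 4*phi - 6 < fr p := by linarith
        have hqlo : 4*phi - 6 < fr q := by linarith
        have hphi : fr p < 4 - 2*phi := by linarith
        have hqhi : fr q < 4 - 2*phi := by linarith
        have hp6 : 6 ≤ p := excl3 p hp2 hplo hphi
        have hq6 : 6 ≤ q := excl3 q hq2 hqlo hqhi
        have hsum2 : fr p + fr q < 4*phi - 5 := by linarith [phi_lo]
        have e := case_C2 p q r s hp6 hq6 (by linarith) hsum2 hr4 hs4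
        refine ⟨[r+2, s+2, p+q-4], by simp, ?_, ?_⟩
        · intro j hj; simp at hj; rcases hj with rfl | rfl | rfl <;> omega
        · simp only [List.map_cons, List.map_nil, List.sum_cons, List.sum_nil]
          omega
    · exact absurd (show ((((p:ℤ)+(q:ℤ)+(r:ℤ)+(s:ℤ)-1):ℤ):ℝ) * phi
            = ((((A p:ℤ)+(A q:ℤ)+(A r:ℤ)+(A s:ℤ)+1):ℤ):ℝ) by
          push_cast; linear_combination A_fr p + A_fr q + A_fr r + A_fr s + hS)
        (phi_int_combo (by omega) _)
    · rcases lt_trichotomy (fr p + fr q + fr r + fr s) (2 + phi) with hS2 | hS2 | hS2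
      · -- SINGLE
        have e := case_single p q r s hp2 hS hS2
        refine ⟨[p+q+r+s-1], by simp, ?_, ?_⟩
        · intro j hj; simp at hj; subst hj; omega
        · simp only [List.map_cons, List.map_nil, List.sum_cons, List.sum_nil]
          omega
      · exact absurd (show ((((p:ℤ)+(q:ℤ)+(r:ℤ)+(s:ℤ)-1):ℤ):ℝ) * phi
              = ((((A p:ℤ)+(A q:ℤ)+(A r:ℤ)+(A s:ℤ)+2):ℤ):ℝ) by
            push_cast; linear_combination A_fr p + A_fr q + A_fr r + A_fr s + hS2)
          (phi_int_combo (by omega) _)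
      · -- Q : S > 2 + phi
        by_cases hall : p = k0 ∧ q = k0 ∧ r = k0 ∧ s = k0
        · obtain ⟨rfl, hq', hr', hs'⟩ := hall
          rw [hq', hr', hs'] at hS2 hBsum
          have hf : (2+phi)/4 < fr p := by linarith
          have h04 : 4 ≤ p := by
            by_contra hlt
            push_neg at hlt
            interval_cases p
            · rw [fr2] at hf; linarith [phi_hi]
            · rw [fr3] at hf; linarith [phi_hi]
          have e := case_Qspecial p h04 hf
          refine ⟨[2*p-4, p+2, p+1], by simp, ?_, ?_⟩
          · intro j hj; simp at hj; rcases hj with rfl | rfl | rfl <;> omega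
          · simp only [List.map_cons, List.map_nil, List.sum_cons, List.sum_nil]
            omega
        · have hone : k0 + 1 ≤ p ∨ k0 + 1 ≤ q ∨ k0 + 1 ≤ r ∨ k0 + 1 ≤ s := by omega
          rcases hone with hbig | hbig | hbig | hbig
          · have e := case_Q2 q r s p hq2 hr2 hp2 (by linarith) (by linarith [phi_lo]) (by linarith)
            refine ⟨[q+r-1, s+1, p-1], by simp, ?_, ?_⟩
            · intro j hj; simp at hj; rcases hj with rfl | rfl | rfl <;> omega
            · simp only [List.map_cons, List.map_nil, List.sum_cons, List.sum_nil]
              omega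
          · have e := case_Q2 p r s q hp2 hr2 hq2 (by linarith) (by linarith [phi_lo]) (by linarith)
            refine ⟨[p+r-1, s+1, q-1], by simp, ?_, ?_⟩
            · intro j hj; simp at hj; rcases hj with rfl | rfl | rfl <;> omega
            · simp only [List.map_cons, List.map_nil, List.sum_cons, List.sum_nil]
              omega
          · have e := case_Q2 p q s r hp2 hq2 hr2 (by linarith) (by linarith [phi_lo]) (by linarith)
            refine ⟨[p+q-1, s+1, r-1], by simp, ?_, ?_⟩
            · intro j hj; simp at hj; rcases hj with rfl | rfl | rfl <;> omega
            · simp only [List.map_cons, List.map_nil, List.sum_cons, List.sum_nil]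
              omega
          · have e := case_Q2 p q r s hp2 hq2 hs2 (by linarith) (by linarith [phi_lo]) (by linarith)
            refine ⟨[p+q-1, r+1, s-1], by simp, ?_, ?_⟩
            · intro j hj; simp at hj; rcases hj with rfl | rfl | rfl <;> omega
            · simp only [List.map_cons, List.map_nil, List.sum_cons, List.sum_nil]
              omega

lemma shrink (k0 : ℕ) (h0 : 2 ≤ k0) :
    ∀ (N : ℕ) (l : List ℕ), l.length ≤ N → (∀ j ∈ l, k0 ≤ j) →
      ∃ l' : List ℕ, l'.length ≤ 3 ∧ (∀ j ∈ l', k0 ≤ j) ∧ (l'.map Bf).sum = (l.map Bf).sum := by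
  intro N
  induction N with
  | zero =>
    intro l hl hm
    exact ⟨l, by omega, hm, rfl⟩
  | succ N ih =>
    intro l hl hm
    by_cases h3 : l.length ≤ 3
    · exact ⟨l, h3, hm, rfl⟩
    · rcases l with _ | ⟨a, _ | ⟨b, _ | ⟨c, _ | ⟨d, rest⟩⟩⟩⟩ <;> simp at h3
      have ha : k0 ≤ a := hm a (by simp)
      have hb : k0 ≤ b := hm b (by simp)
      have hc : k0 ≤ c := hm c (by simp)
      have hd : k0 ≤ d := hm d (by simp)
      obtain ⟨l3, hl3, hm3, hs3⟩ := reduce4 k0 a b c d h0 ha hb hc hd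
      obtain ⟨l', h1', h2', h3'⟩ := ih (l3 ++ rest)
        (by simp at hl ⊢; omega)
        (by
          intro j hj
          rcases List.mem_append.mp hj with h | h
          · exact hm3 j h
          · exact hm j (by simp [h]))
      refine ⟨l', h1', h2', ?_⟩
      rw [h3']
      simp only [List.map_append, List.sum_append, List.map_cons, List.sum_cons]
      omega

theorem upper_wythoff_combination_to_three (m n : ℕ) (hm : 3 ≤ m) (hn : 1 ≤ n)
    (h : n ∈ AddSubmonoid.closure {k : ℕ | IsUpperWythoff k ∧ m ≤ k}) :
    (∃ a : ℕ, IsUpperWythoff a ∧ m ≤ a ∧ n = a) ∨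
    (∃ a b : ℕ, IsUpperWythoff a ∧ IsUpperWythoff b ∧ m ≤ a ∧ m ≤ b ∧ n = a + b) ∨
    (∃ a b c : ℕ, IsUpperWythoff a ∧ IsUpperWythoff b ∧ IsUpperWythoff c ∧
      m ≤ a ∧ m ≤ b ∧ m ≤ c ∧ n = a + b + c) := by
  classical
  have hex : ∃ k, 1 ≤ k ∧ m ≤ Bf k := by
    refine ⟨m, by omega, ?_⟩
    rw [Bf_eq]; have := A_ge m; omega
  set k0 := Nat.find hex with hk0def
  have hk0spec : 1 ≤ k0 ∧ m ≤ Bf k0 := Nat.find_spec hex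
  have hBf1 : Bf 1 = 2 := by
    rw [Bf_eq]
    have : A 1 = 1 := A_val 1 1 (by norm_num) (by norm_num)
    omega
  have hk02 : 2 ≤ k0 := by
    rcases Nat.lt_or_ge k0 2 with hlt | hge
    · exfalso
      have h1 : k0 = 1 := by omega
      rw [h1, hBf1] at hk0spec
      omega
    · exact hge
  have key : ∃ l : List ℕ, (∀ j ∈ l, k0 ≤ j) ∧ (l.map Bf).sum = n := by
    refine AddSubmonoid.closure_induction ?_ ?_ ?_ h
    · rintro x ⟨⟨k, hk1, rfl⟩, hmx⟩
      refine ⟨[k], ?_, by simp [Bf]⟩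
      intro j hj; simp at hj; subst hj
      exact Nat.find_min' hex ⟨hk1, hmx⟩
    · exact ⟨[], by simp, by simp⟩
    · rintro x y hx hy ⟨lx, hlx, hsx⟩ ⟨ly, hly, hsy⟩
      refine ⟨lx ++ ly, ?_, by simp [hsx, hsy]⟩
      intro j hj
      rcases List.mem_append.mp hj with h' | h'
      · exact hlx j h'
      · exact hly j h'
  obtain ⟨l, hlmem, hlsum⟩ := key
  obtain ⟨l', hlen, hmem, hsum⟩ := shrink k0 hk02 l.length l le_rfl hlmem
  rw [hlsum] at hsum
  have hmle : ∀ j, k0 ≤ j → m ≤ Bf j := fun j hj => le_trans hk0spec.2 (Bf_mono hj)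
  have hUW : ∀ j, k0 ≤ j → IsUpperWythoff (Bf j) := fun j hj => ⟨j, by omega, rfl⟩
  rcases l' with _ | ⟨x, _ | ⟨y, _ | ⟨z, _ | ⟨w, rest⟩⟩⟩⟩
  · simp at hsum; omega
  · have hx := hmem x (by simp)
    left
    exact ⟨Bf x, hUW x hx, hmle x hx, by simp at hsum; omega⟩
  · have hx := hmem x (by simp)
    have hy := hmem y (by simp)
    right; left
    exact ⟨Bf x, Bf y, hUW x hx, hUW y hy, hmle x hx, hmle y hy, by simp at hsum; omega⟩
  · have hx := hmem x (by simp)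
    have hy := hmem y (by simp)
    have hz := hmem z (by simp)
    right; right
    exact ⟨Bf x, Bf y, Bf z, hUW x hx, hUW y hy, hUW z hz, hmle x hx, hmle y hy, hmle z hz,
      by simp at hsum; omega⟩
  · simp at hlen; omega
end

section
/- For all n ≥ 1, the Frobenius number G_L(n) of the set {L_n, L_{n+1}, L_{n+2}, …} satisfies −3 ≤ G_L(n) − 2L_n ≤ 1, where L_n = ⌊nφ⌋ and φ = (1+√5)/2. -/
/-- The lower Wythoff sequence. -/
noncomputable def lw (n : ℕ) : ℕ := ⌊(n : ℝ) * phi⌋₊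

lemma phi_gt : (3:ℝ)/2 < phi := by
  have h5 : Real.sqrt 5 ^ 2 = 5 := Real.sq_sqrt (by norm_num)
  have hnn : (0:ℝ) ≤ Real.sqrt 5 := Real.sqrt_nonneg 5
  unfold phi; nlinarith

lemma phi_lt : phi < 5/3 := by
  have h5 : Real.sqrt 5 ^ 2 = 5 := Real.sq_sqrt (by norm_num)
  have hnn : (0:ℝ) ≤ Real.sqrt 5 := Real.sqrt_nonneg 5
  unfold phi; nlinarith

lemma lw_eq (j : ℕ) : (lw j : ℝ) = (j : ℝ) * phi - Int.fract ((j : ℝ) * phi) := by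
  have h0 : (0:ℝ) ≤ (j : ℝ) * phi := by
    have := phi_gt; positivity
  have h1 : ((lw j : ℤ) : ℝ) = (⌊(j : ℝ) * phi⌋ : ℝ) := by
    have := Int.natCast_floor_eq_floor h0
    exact_mod_cast congrArg (fun z : ℤ => (z : ℝ)) this
  rw [Int.self_sub_fract]
  exact_mod_cast h1

lemma step_lb (j : ℕ) : lw j + 1 ≤ lw (j + 1) := by
  have e1 := lw_eq j
  have e2 := lw_eq (j + 1)
  have f1 := Int.fract_nonneg ((j : ℝ) * phi)
  have f2 := Int.fract_lt_one (((j + 1 : ℕ) : ℝ) * phi)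
  have hlt : (lw j : ℝ) < lw (j + 1) := by
    push_cast at e2 ⊢
    push_cast at f2
    nlinarith [phi_gt]
  exact Nat.cast_lt (α := ℝ) |>.mp hlt

lemma step_ub (j : ℕ) : lw (j + 1) ≤ lw j + 2 := by
  have e1 := lw_eq j
  have e2 := lw_eq (j + 1)
  have f1 := Int.fract_lt_one ((j : ℝ) * phi)
  have f2 := Int.fract_nonneg (((j + 1 : ℕ) : ℝ) * phi)
  have hlt : (lw (j + 1) : ℝ) < (lw j : ℝ) + 3 := by
    push_cast at e2 f2 ⊢
    nlinarith [phi_lt]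
  have : lw (j + 1) < lw j + 3 := by exact_mod_cast (by push_cast; linarith : ((lw (j+1) : ℕ) : ℝ) < ((lw j + 3 : ℕ) : ℝ))
  omega

lemma lw_mono : Monotone lw := by
  intro a b h
  exact Nat.floor_mono (mul_le_mul_of_nonneg_right (by exact_mod_cast h) (by linarith [phi_gt]))

lemma lw_strictMono : StrictMono lw :=
  strictMono_nat_of_lt_succ fun n => by have := step_lb n; omega

lemma add_ub (i j : ℕ) : lw (i + j) ≤ lw i + lw j + 1 := by
  have e1 := lw_eq i
  have e2 := lw_eq j
  have e3 := lw_eq (i + j)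
  have f1 := Int.fract_lt_one ((i : ℝ) * phi)
  have f2 := Int.fract_lt_one ((j : ℝ) * phi)
  have f3 := Int.fract_nonneg (((i + j : ℕ) : ℝ) * phi)
  have hlt : (lw (i + j) : ℝ) < (lw i : ℝ) + lw j + 2 := by
    push_cast at e3 f3 ⊢
    nlinarith
  have : lw (i + j) < lw i + lw j + 2 := by
    exact_mod_cast (by push_cast; linarith : ((lw (i+j) : ℕ) : ℝ) < ((lw i + lw j + 2 : ℕ) : ℝ))
  omega

lemma sum_exact (i j : ℕ)
    (h : Int.fract (((i + j : ℕ) : ℝ) * phi) < Int.fract ((i : ℝ) * phi)) :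
    lw (i + j) = lw i + lw j + 1 := by
  have e1 := lw_eq i
  have e2 := lw_eq j
  have e3 := lw_eq (i + j)
  have f2 := Int.fract_nonneg ((j : ℝ) * phi)
  have hlt : ((lw i : ℝ) + lw j) < lw (i + j) := by
    push_cast at e3 h ⊢
    nlinarith
  have h1 : lw i + lw j < lw (i + j) := by
    exact_mod_cast (by push_cast; linarith : ((lw i + lw j : ℕ) : ℝ) < ((lw (i+j) : ℕ) : ℝ))
  have h2 := add_ub i j
  omega

lemma no_three (a : ℕ) (h1 : lw (a + 1) = lw a + 1) (h2 : lw (a + 2) = lw a + 2) : False := by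
  have e1 := lw_eq a
  have e2 := lw_eq (a + 1)
  have e3 := lw_eq (a + 2)
  have f1 := Int.fract_nonneg ((a : ℝ) * phi)
  have f3 := Int.fract_lt_one (((a + 2 : ℕ) : ℝ) * phi)
  have c1 : ((lw (a+1)) : ℝ) = (lw a : ℝ) + 1 := by exact_mod_cast h1
  have c2 : ((lw (a+2)) : ℝ) = (lw a : ℝ) + 2 := by exact_mod_cast h2
  push_cast at e2 e3 f3
  nlinarith [phi_gt]

lemma window (a : ℕ) :
    phi - 1 ≤ Int.fract ((a : ℝ) * phi) ∨ phi - 1 ≤ Int.fract (((a + 1 : ℕ) : ℝ) * phi) ∨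
      phi - 1 ≤ Int.fract (((a + 2 : ℕ) : ℝ) * phi) := by
  have e1 := lw_eq a
  have e2 := lw_eq (a + 1)
  have e3 := lw_eq (a + 2)
  have f1 := Int.fract_nonneg ((a : ℝ) * phi)
  have f2 := Int.fract_nonneg (((a + 1 : ℕ) : ℝ) * phi)
  have f3 := Int.fract_nonneg (((a + 2 : ℕ) : ℝ) * phi)
  have s1a := step_lb a
  have s1b := step_ub a
  have s2a : lw (a + 1) + 1 ≤ lw (a + 2) := step_lb (a + 1)
  have s2b : lw (a + 2) ≤ lw (a + 1) + 2 := step_ub (a + 1)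
  have d1 : lw (a + 1) = lw a + 1 ∨ lw (a + 1) = lw a + 2 := by omega
  have d2 : lw (a + 2) = lw (a + 1) + 1 ∨ lw (a + 2) = lw (a + 1) + 2 := by omega
  push_cast at e2 e3 f2 f3
  have c1 : ((lw (a+1)) : ℝ) = (lw a : ℝ) + (lw (a+1) - lw a : ℕ) := by
    push_cast [Nat.cast_sub (by omega : lw a ≤ lw (a+1))]; ring
  have c2 : ((lw (a+2)) : ℝ) = (lw (a+1) : ℝ) + (lw (a+2) - lw (a+1) : ℕ) := by
    push_cast [Nat.cast_sub (by omega : lw (a+1) ≤ lw (a+2))]; ring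
  rcases d1 with d1 | d1
  · right; left
    have : ((lw (a+1)) : ℝ) = (lw a : ℝ) + 1 := by exact_mod_cast d1
    push_cast
    linarith
  · have d1' : ((lw (a+1)) : ℝ) = (lw a : ℝ) + 2 := by exact_mod_cast d1
    rcases d2 with d2 | d2
    · right; right
      have : ((lw (a+2)) : ℝ) = (lw (a+1) : ℝ) + 1 := by exact_mod_cast d2
      push_cast
      linarith
    · left
      have : ((lw (a+2)) : ℝ) = (lw (a+1) : ℝ) + 2 := by exact_mod_cast d2
      linarith [phi_lt]

lemma lw_one : lw 1 = 1 := by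
  have h1 := phi_gt
  have h2 := phi_lt
  unfold lw
  rw [Nat.floor_eq_iff (by push_cast; linarith)]
  push_cast
  constructor <;> linarith

lemma lw_two : lw 2 = 3 := by
  have h1 := phi_gt
  have h2 := phi_lt
  unfold lw
  rw [Nat.floor_eq_iff (by push_cast; linarith)]
  push_cast
  constructor <;> linarith

lemma exists_near (m : ℕ) (hm : 1 ≤ m) : ∃ s, m ≤ lw s ∧ lw s ≤ m + 1 := by
  induction m, hm using Nat.le_induction with
  | base => exact ⟨1, by rw [lw_one]; omega⟩
  | succ m hm ih =>
    obtain ⟨s, h1, h2⟩ := ih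
    by_cases h : m + 1 ≤ lw s
    · exact ⟨s, h, by omega⟩
    · have hs : lw s = m := by omega
      refine ⟨s + 1, ?_, ?_⟩
      · have := step_lb s; omega
      · have := step_ub s; omega

lemma mem_closure_of_big (n : ℕ) (hn : 1 ≤ n) (m : ℕ) (hm : 2 * lw n + 2 ≤ m) :
    m ∈ AddSubmonoid.closure {x : ℕ | ∃ j, n ≤ j ∧ x = lw j} := by
  set S := {x : ℕ | ∃ j, n ≤ j ∧ x = lw j} with hS
  have memS : ∀ j, n ≤ j → lw j ∈ AddSubmonoid.closure S := fun j hj =>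
    AddSubmonoid.subset_closure ⟨j, hj, rfl⟩
  obtain ⟨s, hs1, hs2⟩ := exists_near m (by omega)
  have hns : n ≤ s := by
    by_contra h
    have := lw_mono (by omega : s ≤ n)
    omega
  rcases (by omega : lw s = m ∨ lw s = m + 1) with h | h
  · exact h ▸ memS s hns
  · -- lw s = m + 1
    have h2n : lw (n + n) ≤ 2 * lw n + 1 := by have := add_ub n n; omega
    have hs2n : 2 * n + 1 ≤ s := by
      by_contra hc
      have := lw_mono (by omega : s ≤ n + n)
      omega
    obtain ⟨t, rfl⟩ : ∃ t, s = t + 1 := ⟨s - 1, by omega⟩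
    have hstepa := step_lb t
    have hstepb := step_ub t
    rcases (by omega : lw t = m ∨ lw (t + 1) = lw t + 2) with ht | ht
    · exact ht ▸ memS t (by omega)
    · -- gap 2 at s = t+1
      by_cases hse : t + 1 = 2 * n + 1
      · -- forced case
        have hub : lw (n + (n + 1)) ≤ lw n + lw (n + 1) + 1 := add_ub n (n + 1)
        have hlb : lw n + 1 ≤ lw (n + 1) := step_lb n
        have hub2 : lw (n + 1) ≤ lw n + 2 := step_ub n
        have heq : n + (n + 1) = t + 1 := by omega
        rw [heq] at hub
        have hm' : m = lw n + lw (n + 1) := by omega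
        rw [hm']
        exact AddSubmonoid.add_mem _ (memS n le_rfl) (memS (n + 1) (by omega))
      · -- s ≥ 2n+2 : fract argument
        have hs22 : 2 * n + 2 ≤ t + 1 := by omega
        have hfs : Int.fract (((t + 1 : ℕ) : ℝ) * phi) < phi - 1 := by
          have e1 := lw_eq t
          have e2 := lw_eq (t + 1)
          have f1 := Int.fract_lt_one ((t : ℝ) * phi)
          have c : ((lw (t + 1)) : ℝ) = (lw t : ℝ) + 2 := by exact_mod_cast ht
          push_cast at e2 ⊢
          linarith
        obtain hw | hw | hw := window n
        · have hij : n + (t + 1 - n) = t + 1 := by omega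
          have hrep := sum_exact n (t + 1 - n) (by rw [hij]; linarith)
          rw [hij] at hrep
          have hm' : m = lw n + lw (t + 1 - n) := by omega
          rw [hm']
          exact AddSubmonoid.add_mem _ (memS n le_rfl) (memS (t + 1 - n) (by omega))
        · have hij : (n + 1) + (t + 1 - (n + 1)) = t + 1 := by omega
          have hrep := sum_exact (n + 1) (t + 1 - (n + 1)) (by rw [hij]; linarith)
          rw [hij] at hrep
          have hm' : m = lw (n + 1) + lw (t + 1 - (n + 1)) := by omega
          rw [hm']
          exact AddSubmonoid.add_mem _ (memS (n + 1) (by omega)) (memS (t + 1 - (n + 1)) (by omega))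
        · have hij : (n + 2) + (t + 1 - (n + 2)) = t + 1 := by omega
          have hrep := sum_exact (n + 2) (t + 1 - (n + 2)) (by rw [hij]; linarith)
          rw [hij] at hrep
          have hm' : m = lw (n + 2) + lw (t + 1 - (n + 2)) := by omega
          rw [hm']
          exact AddSubmonoid.add_mem _ (memS (n + 2) (by omega)) (memS (t + 1 - (n + 2)) (by omega))

lemma mem_char (n m : ℕ)
    (hm : m ∈ AddSubmonoid.closure {x : ℕ | ∃ j, n ≤ j ∧ x = lw j}) :
    m = 0 ∨ (∃ j, n ≤ j ∧ m = lw j) ∨ 2 * lw n ≤ m := by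
  induction hm using AddSubmonoid.closure_induction with
  | mem x hx =>
    right; left
    obtain ⟨j, hj, rfl⟩ := hx
    exact ⟨j, hj, rfl⟩
  | zero => left; rfl
  | add x y hx hy ihx ihy =>
    have hxg : x = 0 ∨ lw n ≤ x := by
      rcases ihx with h | ⟨j, hj, rfl⟩ | h
      · left; exact h
      · right; exact lw_mono hj
      · right; have : 0 ≤ lw n := Nat.zero_le _; omega
    have hyg : y = 0 ∨ lw n ≤ y := by
      rcases ihy with h | ⟨j, hj, rfl⟩ | h
      · left; exact h
      · right; exact lw_mono hj
      · right; omega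
    rcases hxg with rfl | hx'
    · simpa using ihy
    · rcases hyg with rfl | hy'
      · simpa using ihx
      · right; right; omega

theorem frobenius_lower_wythoff_bounds (n F : ℕ) (hn : 1 ≤ n)
    (hF : FrobeniusNumber F {x : ℕ | ∃ j, n ≤ j ∧ x = lw j}) :
    -3 ≤ (F : ℤ) - 2 * (lw n : ℤ) ∧ (F : ℤ) - 2 * (lw n : ℤ) ≤ 1 := by
  obtain ⟨hF1, hF2⟩ := hF
  have hup : F ≤ 2 * lw n + 1 := by
    by_contra h
    exact hF1 (mem_closure_of_big n hn F (by omega))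
  refine ⟨?_, by omega⟩
  rcases eq_or_lt_of_le hn with h1 | h2
  · have hl : lw n = 1 := by rw [← h1, lw_one]
    omega
  · have h3 : 3 ≤ lw n := by
      have := lw_mono (show 2 ≤ n by omega)
      rw [lw_two] at this
      exact this
    have hex : ∃ m, 2 * lw n - 3 ≤ m ∧ m + 1 ≤ 2 * lw n ∧ ∀ t, lw t ≠ m := by
      by_contra hc
      push_neg at hc
      obtain ⟨a, ha⟩ := hc (2 * lw n - 3) le_rfl (by omega)
      obtain ⟨b, hb⟩ := hc (2 * lw n - 2) (by omega) (by omega)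
      obtain ⟨c, hcc⟩ := hc (2 * lw n - 1) (by omega) (by omega)
      have hab : a < b := lw_strictMono.lt_iff_lt.mp (by omega)
      have hbc : b < c := lw_strictMono.lt_iff_lt.mp (by omega)
      have g1 : lw (a + 1) = lw a + 1 := by
        have m1 := lw_mono (show a + 1 ≤ b by omega)
        have m2 := step_lb a
        omega
      have g2 : lw (a + 2) = lw a + 2 := by
        have m1 := lw_mono (show a + 2 ≤ c by omega)
        have m2 : lw (a + 1) + 1 ≤ lw (a + 2) := step_lb (a + 1)
        omega
      exact no_three a g1 g2
    obtain ⟨m, hm1, hm2, hm3⟩ := hex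
    have hmnc : m ∉ AddSubmonoid.closure {x : ℕ | ∃ j, n ≤ j ∧ x = lw j} := by
      intro hmem
      rcases mem_char n m hmem with h | ⟨j, hj, hje⟩ | h
      · omega
      · exact hm3 j hje.symm
      · omega
    have hmF : m ≤ F := hF2 hmnc
    omega
end
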